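/- Let α, β, γ, Γ ∈ ℝ and let c : ℝ → ℝ be differentiable and satisfy, for every v ∈ ℝ, the two equations ((γ/4)v² + (β/6)v + 1/8)·c(v) = γv³ + βv² + v + Γ + α and (1/16 + (β/12)v + (γ/4)v²)·c'(v) + ((γ/4)v + β/12)·c(v) = 1/2 + 2βv + 3γv². Then β = 0, γ = 0, and c(v) = 8(v + α + Γ) for all v ∈ ℝ. -/

import Mathlib

/-- Vandermonde-type lemma: a polynomial of degree ≤ 6 with zero constant term
vanishing everywhere has all coefficients zero. -/
lemma vdm6 (e1 e2 e3 e4 e5 e6 : ℝ)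
    (h : ∀ v : ℝ, e1*v + e2*v^2 + e3*v^3 + e4*v^4 + e5*v^5 + e6*v^6 = 0) :
    e1 = 0 ∧ e2 = 0 ∧ e3 = 0 ∧ e4 = 0 ∧ e5 = 0 ∧ e6 = 0 := by
  have ha := h 1
  have hb := h (-1)
  have hd := h 2
  have he := h (-2)
  have hf := h 3
  have hg := h (-3)
  norm_num at ha hb hd he hf hg
  refine ⟨by linarith, by linarith, by linarith, by linarith, by linarith, by linarith⟩

/-- Key step in the proof of Theorem 1.5: matching the order-ε² terms of the
generalized Camassa–Holm equation with Dubrovin's Hamiltonian perturbation ansatz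
yields the displayed system for `c(v)`; its solvability forces `β = γ = 0` and
`c(v) = 8(v + α + Γ)`. -/
theorem dubrovin_order_two_matching
    (α β γ Γ : ℝ) (c : ℝ → ℝ) (hc : Differentiable ℝ c)
    (h1 : ∀ v : ℝ,
      ((γ / 4) * v ^ 2 + (β / 6) * v + 1 / 8) * c v
        = γ * v ^ 3 + β * v ^ 2 + v + Γ + α)
    (h2 : ∀ v : ℝ,
      (1 / 16 + (β / 12) * v + (γ / 4) * v ^ 2) * deriv c v
          + ((γ / 4) * v + β / 12) * c v
        = 1 / 2 + 2 * β * v + 3 * γ * v ^ 2) :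
    β = 0 ∧ γ = 0 ∧ ∀ v : ℝ, c v = 8 * (v + α + Γ) := by
  -- Differentiate h1
  have h3 : ∀ v : ℝ,
      (γ/2*v + β/6) * c v + ((γ/4)*v^2 + (β/6)*v + 1/8) * deriv c v
        = 3*γ*v^2 + 2*β*v + 1 := by
    intro v
    have hP : HasDerivAt (fun v : ℝ => (γ/4)*v^2 + (β/6)*v + 1/8) (γ/2*v + β/6) v := by
      have := (((hasDerivAt_pow 2 v).const_mul (γ/4)).add
        ((hasDerivAt_id v).const_mul (β/6))).add_const (1/8 : ℝ)
      refine this.congr_deriv ?_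
      simp; ring
    have hF : HasDerivAt (fun v : ℝ => ((γ/4)*v^2 + (β/6)*v + 1/8) * c v)
        ((γ/2*v + β/6) * c v + ((γ/4)*v^2 + (β/6)*v + 1/8) * deriv c v) v :=
      hP.mul (hc v).hasDerivAt
    have hQ : HasDerivAt (fun v : ℝ => γ*v^3 + β*v^2 + v + Γ + α)
        (3*γ*v^2 + 2*β*v + 1) v := by
      have := (((((hasDerivAt_pow 3 v).const_mul γ).add
        ((hasDerivAt_pow 2 v).const_mul β)).add (hasDerivAt_id v)).add_const Γ).add_const α
      refine this.congr_deriv ?_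
      simp; ring
    have heq : (fun v : ℝ => ((γ/4)*v^2 + (β/6)*v + 1/8) * c v)
        = fun v : ℝ => γ*v^3 + β*v^2 + v + Γ + α := funext h1
    rw [heq] at hF
    exact hF.unique hQ
  -- Eliminate c and deriv c to get a polynomial identity
  have hE : ∀ v : ℝ,
      (β/64)*v + ((β*γ*Γ)/48 + (α*β*γ)/48 + γ/128 + β^2/24)*v^2
        + ((γ^2*Γ)/16 + (α*γ^2)/16 + 3*(β*γ)/32 + β^3/36)*v^3
        + (5*γ^2/64 + 5*(β^2*γ)/48)*v^4
        + (7*(β*γ^2)/48)*v^5 + (γ^3/16)*v^6 = 0 := by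
    intro v
    linear_combination
      -((1/16 + (β/12)*v + (γ/4)*v^2) * (γ/2*v + β/6)
        - ((γ/4)*v^2 + (β/6)*v + 1/8) * ((γ/4)*v + β/12)) * h1 v
      - ((γ/4)*v^2 + (β/6)*v + 1/8)^2 * h2 v
      + (1/16 + (β/12)*v + (γ/4)*v^2) * ((γ/4)*v^2 + (β/6)*v + 1/8) * h3 v
  obtain ⟨e1, e2, e3, e4, e5, e6⟩ := vdm6 _ _ _ _ _ _ hE
  have hβ : β = 0 := by linarith
  have hγ : γ = 0 := by
    have : γ^3 = 0 := by linarith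
    exact pow_eq_zero_iff (by norm_num) |>.mp this
  refine ⟨hβ, hγ, fun v => ?_⟩
  have := h1 v
  rw [hβ, hγ] at this
  nlinarith [this]
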